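/- Let e₁, …, eₖ be an orthogonal basis of a k-dimensional vector space V with a nondegenerate symmetric bilinear form (char K = 0), with Q(eᵢ) ≠ 0. In the Clifford algebra C of V, for any sequence of column lengths r₁ ≥ r₂ ≥ ⋯ ≥ r_p with r₁ ≤ k, the product Π_{i=1}^{p} S_{rᵢ}(ι(e₁),…,ι(e_{rᵢ})) of standard polynomials is nonzero in C. -/

import Mathlib

/-- The standard polynomial `Sₙ` evaluated at `v₁, …, vₙ`. -/
def stdPoly {A : Type*} [Ring A] (n : ℕ) (v : Fin n → A) : A :=
  ∑ σ : Equiv.Perm (Fin n),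
    ((Equiv.Perm.sign σ : ℤ) • (List.ofFn fun i => v (σ i)).prod)



section Aux
variable {A : Type*} [Ring A]

lemma keyAux (a b : A) (l₂ : List A) : ∀ l₁ : List A, a * b = -(b * a) →
    (∀ w ∈ l₁, a * w = -(w * a)) → (∀ w ∈ l₁, b * w = -(w * b)) →
    a * (l₁ ++ b :: l₂).prod = -(b * (l₁ ++ a :: l₂).prod) := by
  intro l₁
  induction l₁ with
  | nil =>
      intro hab _ _
      simp only [List.nil_append, List.prod_cons, ← mul_assoc, hab, neg_mul]
  | cons c t ih =>
      intro hab h1 h2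
      have hac : a * c = -(c * a) := h1 c (by simp)
      have hbc : b * c = -(c * b) := h2 c (by simp)
      have iht := ih hab (fun w hw => h1 w (by simp [hw])) (fun w hw => h2 w (by simp [hw]))
      simp only [List.cons_append, List.prod_cons]
      calc a * (c * (t ++ b :: l₂).prod)
          = (a * c) * (t ++ b :: l₂).prod := by rw [mul_assoc]
        _ = -(c * (a * (t ++ b :: l₂).prod)) := by rw [hac]; noncomm_ring
        _ = -(c * -(b * (t ++ a :: l₂).prod)) := by rw [iht]
        _ = (c * b) * (t ++ a :: l₂).prod := by noncomm_ring
        _ = -(b * (c * (t ++ a :: l₂).prod)) := by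
            rw [← neg_neg (c * b), ← hbc]; noncomm_ring

lemma ofFn_split {n q : ℕ} (h : q < n) (f : Fin n → A) :
    List.ofFn f = (List.ofFn fun i : Fin q => f ⟨i, i.2.trans h⟩) ++
      f ⟨q, h⟩ :: (List.ofFn fun i : Fin (n - q - 1) => f ⟨q + 1 + i, by omega⟩) := by
  apply List.ext_getElem
  · simp; omega
  · intro i h1 h2
    rcases lt_trichotomy i q with hi | hi | hi
    · simp [List.getElem_append, List.getElem_ofFn, hi]
    · subst hi
      simp [List.getElem_append, List.getElem_ofFn]
    · have : ¬ i < q := by omega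
      rw [List.getElem_ofFn]
      rw [List.getElem_append_right (by simpa using this.imp fun h => h)]
      · simp only [List.length_ofFn]
        rw [List.getElem_cons]
        split
        · omega
        · rw [List.getElem_ofFn]
          congr 1
          ext
          simp
          omega

lemma permProd : ∀ (n : ℕ) (y : Fin n → A), (∀ i j, i ≠ j → y i * y j = -(y j * y i)) →
    ∀ σ : Equiv.Perm (Fin n),
    (List.ofFn fun i => y (σ i)).prod = (Equiv.Perm.sign σ : ℤ) • (List.ofFn y).prod := by
  intro n
  induction n with
  | zero => intro y _ σ; simp [Subsingleton.elim σ 1]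
  | succ n ih =>
      intro y hy σ
      obtain ⟨p, τ, rfl⟩ : ∃ p τ, σ = Equiv.Perm.decomposeFin.symm (p, τ) :=
        ⟨(Equiv.Perm.decomposeFin σ).1, (Equiv.Perm.decomposeFin σ).2, by simp⟩
      set y' : Fin n → A := fun i => y (Equiv.swap 0 p i.succ) with hy'
      have hy'anti : ∀ i j, i ≠ j → y' i * y' j = -(y' j * y' i) := by
        intro i j hij
        exact hy _ _ (fun hh => hij (Fin.succ_injective _ ((Equiv.swap 0 p).injective hh)))
      have step1 : (List.ofFn fun i => y (Equiv.Perm.decomposeFin.symm (p, τ) i)).prod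
          = y p * (List.ofFn fun i => y' (τ i)).prod := by
        rw [List.ofFn_succ]
        simp [Equiv.Perm.decomposeFin_symm_apply_zero, Equiv.Perm.decomposeFin_symm_apply_succ]
        rfl
      rw [step1, ih y' hy'anti τ, Equiv.Perm.decomposeFin.symm_sign]
      by_cases hp : p = 0
      · subst hp
        have : (List.ofFn y') = List.ofFn fun i : Fin n => y i.succ := by
          simp [hy']
        rw [this]
        have : y 0 * (List.ofFn fun i : Fin n => y i.succ).prod = (List.ofFn y).prod := by
          rw [List.ofFn_succ]; simp
        rw [mul_smul_comm, this]
        norm_num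
      · -- p = ⟨q+1, _⟩
        obtain ⟨q, hq⟩ : ∃ q, (p : ℕ) = q + 1 := by
          rcases Nat.exists_eq_succ_of_ne_zero (fun h => hp (Fin.ext h)) with ⟨q, hq⟩
          exact ⟨q, hq⟩
        have hqn : q < n := by omega
        set f : Fin n → A := fun i => y i.succ with hf
        have hf_split := ofFn_split hqn f
        have hy'_split := ofFn_split hqn y'
        have hmid_f : f ⟨q, hqn⟩ = y p := by
          simp only [hf]; congr 1; ext; simp [hq]
        have hmid_y' : y' ⟨q, hqn⟩ = y 0 := by
          simp only [hy']
          have : (⟨q, hqn⟩ : Fin n).succ = p := by ext; simp [hq]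
          rw [this, Equiv.swap_apply_right]
        have hside1 : (List.ofFn fun i : Fin q => y' ⟨i, i.2.trans hqn⟩)
            = (List.ofFn fun i : Fin q => f ⟨i, i.2.trans hqn⟩) := by
          congr 1; funext i
          simp only [hy', hf]
          congr 1
          apply Equiv.swap_apply_of_ne_of_ne
          · exact Fin.succ_ne_zero _
          · intro hh
            have := congrArg Fin.val hh
            simp [hq] at this
            omega
        have hside2 : (List.ofFn fun i : Fin (n - q - 1) => y' ⟨q + 1 + i, by omega⟩)
            = (List.ofFn fun i : Fin (n - q - 1) => f ⟨q + 1 + i, by omega⟩) := by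
          congr 1; funext i
          simp only [hy', hf]
          congr 1
          apply Equiv.swap_apply_of_ne_of_ne
          · exact Fin.succ_ne_zero _
          · intro hh
            have := congrArg Fin.val hh
            simp [hq] at this
            omega
        set l₁ := List.ofFn fun i : Fin q => f ⟨i, i.2.trans hqn⟩ with hl₁
        set l₂ := List.ofFn fun i : Fin (n - q - 1) => f ⟨q + 1 + i, by omega⟩ with hl₂
        have e1 : List.ofFn y' = l₁ ++ y 0 :: l₂ := by
          rw [hy'_split, hmid_y', hside1, hside2]
        have e2 : List.ofFn f = l₁ ++ y p :: l₂ := by rw [hf_split, hmid_f]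
        have hmem₁ : ∀ w ∈ l₁, ∃ i : Fin q, w = y (⟨i, i.2.trans hqn⟩ : Fin n).succ := by
          intro w hw
          rw [hl₁, List.mem_ofFn] at hw
          obtain ⟨i, hi⟩ := hw
          exact ⟨i, hi.symm⟩
        have key : y p * (List.ofFn y').prod = -(y 0 * (List.ofFn f).prod) := by
          rw [e1, e2]
          apply keyAux
          · exact hy _ _ hp
          · intro w hw
            obtain ⟨i, rfl⟩ := hmem₁ w hw
            apply hy
            intro hh
            have := congrArg Fin.val hh
            simp [hq] at this
            omega
          · intro w hw
            obtain ⟨i, rfl⟩ := hmem₁ w hw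
            apply hy
            intro hh
            have := congrArg Fin.val hh
            simp at this
        have hyfn : y 0 * (List.ofFn f).prod = (List.ofFn y).prod := by
          rw [List.ofFn_succ]; simp [hf]
        rw [if_neg hp, mul_smul_comm, key, hyfn]
        push_cast
        rw [neg_mul, one_mul, neg_smul, smul_neg]

lemma stdPoly_eq_factorial_smul (n : ℕ) (y : Fin n → A)
    (hy : ∀ i j, i ≠ j → y i * y j = -(y j * y i)) :
    stdPoly n y = n.factorial • (List.ofFn y).prod := by
  unfold stdPoly
  have : ∀ σ : Equiv.Perm (Fin n),
      ((Equiv.Perm.sign σ : ℤ) • (List.ofFn fun i => y (σ i)).prod) = (List.ofFn y).prod := by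
    intro σ
    rw [permProd n y hy σ, smul_smul]
    have : ((Equiv.Perm.sign σ : ℤ)) * ((Equiv.Perm.sign σ : ℤ)) = 1 := by
      rcases Int.units_eq_one_or (Equiv.Perm.sign σ) with h | h <;> simp [h]
    rw [this, one_smul]
  rw [Finset.sum_congr rfl fun σ _ => this σ, Finset.sum_const, Finset.card_univ,
    Fintype.card_perm, Fintype.card_fin]
end Aux
lemma prod_scalar_unit {K C : Type*} [Field K] [Ring C] [Algebra K C] :
    ∀ l : List C, (∀ x ∈ l, ∃ (c : K) (u : C), c ≠ 0 ∧ IsUnit u ∧ x = c • u) →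
    ∃ (c : K) (u : C), c ≠ 0 ∧ IsUnit u ∧ l.prod = c • u := by
  intro l
  induction l with
  | nil => exact fun _ => ⟨1, 1, one_ne_zero, isUnit_one, by simp⟩
  | cons a t ih =>
      intro h
      obtain ⟨c, u, hc, hu, ha⟩ := h a (by simp)
      obtain ⟨d, v, hd, hv, ht⟩ := ih fun x hx => h x (by simp [hx])
      refine ⟨c * d, u * v, mul_ne_zero hc hd, hu.mul hv, ?_⟩
      rw [List.prod_cons, ha, ht, smul_mul_smul_comm]

theorem stmt17 (K V : Type*) [Field K] [CharZero K] [AddCommGroup V] [Module K V]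
    (k : ℕ) (b : Module.Basis (Fin k) K V) (Q : QuadraticForm K V)
    (horth : ∀ i j : Fin k, i ≠ j → QuadraticMap.polar Q (b i) (b j) = 0)
    (hQ : ∀ i, Q (b i) ≠ 0)
    (p : ℕ) (r : Fin p → ℕ) (hpos : ∀ i, 0 < r i)
    (hdec : ∀ i j : Fin p, i ≤ j → r j ≤ r i) (hle : ∀ i, r i ≤ k) :
    (List.ofFn fun i : Fin p =>
        stdPoly (r i) (fun j : Fin (r i) =>
          CliffordAlgebra.ι Q (b ⟨(j : ℕ), lt_of_lt_of_le j.2 (hle i)⟩))).prod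
      ≠ 0 := by
  letI : Invertible (2 : K) := invertibleOfNonzero two_ne_zero
  haveI : Nontrivial (CliffordAlgebra Q) :=
    (CliffordAlgebra.equivExterior Q).symm.injective.nontrivial
  -- each ι (b i) is a unit
  have hunit : ∀ m : Fin k, IsUnit (CliffordAlgebra.ι Q (b m)) := by
    intro m
    have h1 : CliffordAlgebra.ι Q (b m) * ((Q (b m))⁻¹ • CliffordAlgebra.ι Q (b m)) = 1 := by
      rw [mul_smul_comm, CliffordAlgebra.ι_sq_scalar, Algebra.smul_def,
        ← map_mul, inv_mul_cancel₀ (hQ m), map_one]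
    have h2 : ((Q (b m))⁻¹ • CliffordAlgebra.ι Q (b m)) * CliffordAlgebra.ι Q (b m) = 1 := by
      rw [smul_mul_assoc, CliffordAlgebra.ι_sq_scalar, Algebra.smul_def,
        ← map_mul, inv_mul_cancel₀ (hQ m), map_one]
    exact ⟨⟨_, _, h1, h2⟩, rfl⟩
  have hanti : ∀ i j : Fin k, i ≠ j →
      CliffordAlgebra.ι Q (b i) * CliffordAlgebra.ι Q (b j)
        = -(CliffordAlgebra.ι Q (b j) * CliffordAlgebra.ι Q (b i)) := by
    intro i j hij
    have h := CliffordAlgebra.ι_mul_ι_add_swap (Q := Q) (b i) (b j)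
    rw [horth i j hij, map_zero] at h
    exact eq_neg_of_add_eq_zero_left h
  set L := (List.ofFn fun i : Fin p =>
      stdPoly (r i) (fun j : Fin (r i) =>
        CliffordAlgebra.ι Q (b ⟨(j : ℕ), lt_of_lt_of_le j.2 (hle i)⟩))) with hL
  obtain ⟨c, u, hc, hu, hprod⟩ := prod_scalar_unit (K := K) L (by
    intro x hx
    rw [hL, List.mem_ofFn] at hx
    obtain ⟨i, rfl⟩ := hx
    set y : Fin (r i) → CliffordAlgebra Q := fun j =>
      CliffordAlgebra.ι Q (b ⟨(j : ℕ), lt_of_lt_of_le j.2 (hle i)⟩) with hy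
    have hyanti : ∀ a c : Fin (r i), a ≠ c → y a * y c = -(y c * y a) := by
      intro a c hac
      apply hanti
      intro hh
      have hval := congrArg Fin.val hh
      exact hac (Fin.ext hval)
    refine ⟨((r i).factorial : K), (List.ofFn y).prod, ?_, ?_, ?_⟩
    · exact_mod_cast (r i).factorial_ne_zero
    · apply List.prod_isUnit
      intro m hm
      rw [List.mem_ofFn] at hm
      obtain ⟨j, rfl⟩ := hm
      exact hunit _
    · show stdPoly (r i) y = ((r i).factorial : K) • (List.ofFn y).prod
      rw [stdPoly_eq_factorial_smul _ y hyanti, Nat.cast_smul_eq_nsmul])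
  rw [hprod]
  exact smul_ne_zero hc hu.ne_zero
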